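/- arXiv:1805.10203 — 2 statements merged into one kernel-verified Lean document; each statement's English description precedes it below -/
import Mathlib

section
/- Let m ≥ 3 be an integer. If x ∈ D1 and y ∈ D2, then Σ_{1≤i<j≤m} x_{ij} y_{ij} = 0. -/
/-- **Lemma 25.3.** Let `m ≥ 3`. If `x ∈ D1` (antisymmetric with zero row sums) and
`y ∈ D2` (antisymmetric satisfying the cocycle equations `y i j + y j k + y k i = 0`
for `i < j < k`), then `∑_{i < j} x i j * y i j = 0`. -/
theorem hmrr_D1_D2_orthogonal (m : ℕ) (hm : 3 ≤ m) (x y : Fin m → Fin m → ℝ)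
    (hx_anti : ∀ i j : Fin m, x i j = - x j i)
    (hy_anti : ∀ i j : Fin m, y i j = - y j i)
    (hx : ∀ i : Fin m, ∑ j ∈ Finset.univ.filter (· ≠ i), x i j = 0)
    (hy : ∀ i j k : Fin m, i < j → j < k → y i j + y j k + y k i = 0) :
    ∑ i : Fin m, ∑ j : Fin m, (if i < j then x i j * y i j else 0) = 0 := by
  have hm0 : 0 < m := by omega
  have hxdiag : ∀ i : Fin m, x i i = 0 := fun i => by have := hx_anti i i; linarith
  have hydiag : ∀ i : Fin m, y i i = 0 := fun i => by have := hy_anti i i; linarith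
  set z : Fin m := ⟨0, hm0⟩ with hz
  set f : Fin m → ℝ := fun i => y i z with hf
  -- cocycle for all pairwise distinct triples
  have hcoc : ∀ i j k : Fin m, i ≠ j → j ≠ k → i ≠ k →
      y i j + y j k + y k i = 0 := by
    intro i j k hij hjk hik
    rcases lt_trichotomy i j with h1 | h1 | h1
    · rcases lt_trichotomy j k with h2 | h2 | h2
      · exact hy i j k h1 h2
      · exact absurd h2 hjk
      · rcases lt_trichotomy i k with h3 | h3 | h3
        · linarith [hy i k j h3 h2, hy_anti i j, hy_anti j k, hy_anti k i]
        · exact absurd h3 hik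
        · linarith [hy k i j h3 h1, hy_anti i j, hy_anti j k, hy_anti k i]
    · exact absurd h1 hij
    · rcases lt_trichotomy j k with h2 | h2 | h2
      · rcases lt_trichotomy i k with h3 | h3 | h3
        · linarith [hy j i k h1 h3, hy_anti i j, hy_anti j k, hy_anti k i]
        · exact absurd h3 hik
        · linarith [hy j k i h2 h3, hy_anti i j, hy_anti j k, hy_anti k i]
      · exact absurd h2 hjk
      · linarith [hy k j i h2 h1, hy_anti i j, hy_anti j k, hy_anti k i]
  -- y is a coboundary
  have hrep : ∀ i j : Fin m, y i j = f i - f j := by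
    intro i j
    by_cases hij : i = j
    · subst hij; simp [hydiag i]
    by_cases hiz : i = z
    · subst hiz; simp only [hf]; linarith [hy_anti z j, hydiag z]
    by_cases hjz : j = z
    · subst hjz; simp only [hf]; linarith [hydiag z]
    · have := hcoc i j z hij hjz hiz
      simp only [hf]
      linarith [hy_anti i z]
  -- zero row sums (over all j)
  have hrow : ∀ i : Fin m, ∑ j : Fin m, x i j = 0 := by
    intro i
    have h1 : (Finset.univ.filter (· ≠ i)) = Finset.univ.erase i := by
      ext a; simp [Finset.mem_erase, and_comm]
    have h2 := hx i
    rw [h1] at h2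
    have := Finset.sum_erase_add Finset.univ (fun j => x i j) (Finset.mem_univ i)
    rw [h2] at this
    simpa [hxdiag i] using this.symm
  have hcol : ∀ j : Fin m, ∑ i : Fin m, x i j = 0 := by
    intro j
    have : ∑ i : Fin m, x i j = ∑ i : Fin m, -(x j i) :=
      Finset.sum_congr rfl fun i _ => hx_anti i j
    rw [this, Finset.sum_neg_distrib, hrow j, neg_zero]
  -- full double sum vanishes
  have hall : ∑ i : Fin m, ∑ j : Fin m, x i j * y i j = 0 := by
    have step1 : ∑ i : Fin m, ∑ j : Fin m, x i j * y i j =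
        (∑ i : Fin m, ∑ j : Fin m, x i j * f i) -
        (∑ i : Fin m, ∑ j : Fin m, x i j * f j) := by
      rw [← Finset.sum_sub_distrib]
      refine Finset.sum_congr rfl fun i _ => ?_
      rw [← Finset.sum_sub_distrib]
      refine Finset.sum_congr rfl fun j _ => ?_
      rw [hrep i j]; ring
    have t1 : ∑ i : Fin m, ∑ j : Fin m, x i j * f i = 0 := by
      refine Finset.sum_eq_zero fun i _ => ?_
      rw [← Finset.sum_mul, hrow i, zero_mul]
    have t2 : ∑ i : Fin m, ∑ j : Fin m, x i j * f j = 0 := by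
      rw [Finset.sum_comm]
      refine Finset.sum_eq_zero fun j _ => ?_
      rw [← Finset.sum_mul, hcol j, zero_mul]
    rw [step1, t1, t2, sub_zero]
  -- split into upper and lower triangles
  have hsym : ∀ i j : Fin m, x i j * y i j = x j i * y j i := by
    intro i j; rw [hx_anti i j, hy_anti i j]; ring
  have hsplit : ∑ i : Fin m, ∑ j : Fin m, x i j * y i j =
      (∑ i : Fin m, ∑ j : Fin m, (if i < j then x i j * y i j else 0)) +
      (∑ i : Fin m, ∑ j : Fin m, (if j < i then x i j * y i j else 0)) := by
    rw [← Finset.sum_add_distrib]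
    refine Finset.sum_congr rfl fun i _ => ?_
    rw [← Finset.sum_add_distrib]
    refine Finset.sum_congr rfl fun j _ => ?_
    rcases lt_trichotomy i j with h | h | h
    · simp [h, not_lt_of_gt h]
    · subst h; simp [hxdiag i]
    · simp [h, not_lt_of_gt h]
  have hlower : (∑ i : Fin m, ∑ j : Fin m, (if j < i then x i j * y i j else 0)) =
      ∑ i : Fin m, ∑ j : Fin m, (if i < j then x i j * y i j else 0) := by
    rw [Finset.sum_comm]
    refine Finset.sum_congr rfl fun i _ => Finset.sum_congr rfl fun j _ => ?_
    rw [hsym j i]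
  rw [hsplit, hlower] at hall
  linarith [hall]
end

section
/- Let m ≥ 3 be an integer. Then there exist linearly independent elements F_1,…,F_{m−1} ∈ D2 such that (F_p)_{ij} ≠ 0 for every 1 ≤ p ≤ m−1 and every 1 ≤ i ≠ j ≤ m, and such that Σ_{p=1}^{m−1} ((F_p)_{ij})^2 = 1 for every pair 1 ≤ i < j ≤ m. -/
noncomputable section

namespace Lemma23Aux

/-- normalization constant of the `k`-th Helmert vector -/
def rr (k : ℕ) : ℝ := Real.sqrt ((k+1)*(k+2))

/-- Helmert basis vectors of the hyperplane orthogonal to `(1,…,1)`. -/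
def uu (k i : ℕ) : ℝ :=
  if i ≤ k then 1 / rr k else if i = k + 1 then -(k+1) / rr k else 0

lemma rr_pos (k : ℕ) : 0 < rr k := by
  apply Real.sqrt_pos.mpr; positivity

lemma rr_ne (k : ℕ) : rr k ≠ 0 := (rr_pos k).ne'

lemma rr_sq (k : ℕ) : rr k * rr k = ((k:ℝ)+1)*((k:ℝ)+2) := by
  have := Real.mul_self_sqrt (by positivity : (0:ℝ) ≤ ((k:ℝ)+1)*((k:ℝ)+2))
  simpa [rr] using this

/-- sum of entries of a Helmert vector is zero -/
lemma uu_sum {k m : ℕ} (hk : k + 1 < m) : ∑ i ∈ Finset.range m, uu k i = 0 := by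
  rw [← Finset.sum_subset (Finset.range_subset_range.mpr hk : Finset.range (k+2) ⊆ Finset.range m)]
  · rw [Finset.sum_range_succ]
    have h1 : ∀ i ∈ Finset.range (k+1), uu k i = 1 / rr k := by
      intro i hi
      simp only [Finset.mem_range] at hi
      simp [uu, Nat.lt_succ_iff.mp hi]
    rw [Finset.sum_congr rfl h1, Finset.sum_const, Finset.card_range]
    have : uu k (k+1) = -(k+1) / rr k := by simp [uu]
    rw [this, nsmul_eq_mul, mul_one_div, ← add_div, div_eq_zero_iff]
    left; push_cast; ring
  · intro i _ hi
    simp only [Finset.mem_range, not_lt] at hi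
    have h1 : ¬ i ≤ k := by omega
    have h2 : i ≠ k + 1 := by omega
    simp [uu, h1, h2]

/-- orthonormality of the Helmert vectors -/
lemma uu_ortho {k l m : ℕ} (hk : k + 1 < m) (hl : l + 1 < m) :
    ∑ i ∈ Finset.range m, uu k i * uu l i = if k = l then 1 else 0 := by
  -- reduce to k ≤ l
  rcases Nat.lt_trichotomy k l with h | h | h
  · -- k < l
    have : ∀ i ∈ Finset.range m, uu k i * uu l i = uu k i * (1 / rr l) := by
      intro i _
      by_cases hik : i ≤ k + 1
      · have : i ≤ l := by omega
        simp [uu, this]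
      · have h1 : ¬ i ≤ k := by omega
        have h2 : i ≠ k + 1 := by omega
        simp [uu, h1, h2]
    rw [Finset.sum_congr rfl this, ← Finset.sum_mul, uu_sum hk]
    simp [Nat.ne_of_lt h]
  · subst h
    rw [if_pos rfl]
    rw [← Finset.sum_subset (Finset.range_subset_range.mpr hk : Finset.range (k+2) ⊆ Finset.range m)]
    · rw [Finset.sum_range_succ]
      have h1 : ∀ i ∈ Finset.range (k+1), uu k i * uu k i = 1 / (((k:ℝ)+1)*((k:ℝ)+2)) := by
        intro i hi
        simp only [Finset.mem_range] at hi
        simp only [uu, if_pos (Nat.lt_succ_iff.mp hi)]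
        rw [div_mul_div_comm, one_mul, rr_sq]
      rw [Finset.sum_congr rfl h1, Finset.sum_const, Finset.card_range]
      have h2 : uu k (k+1) * uu k (k+1) = (((k:ℝ)+1)*((k:ℝ)+1)) / (((k:ℝ)+1)*((k:ℝ)+2)) := by
        simp only [uu]
        rw [if_neg (by omega), if_pos trivial, div_mul_div_comm, rr_sq]
        ring_nf
      rw [h2]
      have hk1 : ((k:ℝ)+1) ≠ 0 := by positivity
      have hk2 : ((k:ℝ)+2) ≠ 0 := by positivity
      rw [nsmul_eq_mul, mul_one_div, ← add_div, div_eq_one_iff_eq (mul_ne_zero hk1 hk2)]; push_cast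
      ring
    · intro i _ hi
      simp only [Finset.mem_range, not_lt] at hi
      have h1 : ¬ i ≤ k := by omega
      have h2 : i ≠ k + 1 := by omega
      simp [uu, h1, h2]
  · -- l < k : symmetric
    have : ∀ i ∈ Finset.range m, uu k i * uu l i = uu l i * (1 / rr k) := by
      intro i _
      by_cases hik : i ≤ l + 1
      · have : i ≤ k := by omega
        simp [uu, this, mul_comm]
      · have h1 : ¬ i ≤ l := by omega
        have h2 : i ≠ l + 1 := by omega
        simp [uu, h1, h2]
    rw [Finset.sum_congr rfl this, ← Finset.sum_mul, uu_sum hl]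
    simp [Nat.ne_of_gt h]

lemma telescope {a b : ℕ} (h : a ≤ b) :
    ∑ k ∈ Finset.Ico a b, (1 / ((((k:ℝ)+1))*((k:ℝ)+2))) = 1/((a:ℝ)+1) - 1/((b:ℝ)+1) := by
  induction b, h using Nat.le_induction with
  | base => simp
  | succ b hb ih =>
    rw [Finset.sum_Ico_succ_top hb, ih]
    have h1 : ((b:ℝ)+1) ≠ 0 := by positivity
    have h2 : ((b:ℝ)+2) ≠ 0 := by positivity
    push_cast
    field_simp
    ring

lemma filter_le_range (j n : ℕ) :
    Finset.filter (fun k => j ≤ k) (Finset.range n) = Finset.Ico j n := by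
  ext k
  simp only [Finset.mem_filter, Finset.mem_range, Finset.mem_Ico]
  omega

lemma sum_ite_le (j n : ℕ) (f : ℕ → ℝ) :
    ∑ k ∈ Finset.range n, (if j ≤ k then f k else 0) = ∑ k ∈ Finset.Ico j n, f k := by
  rw [← Finset.sum_filter, filter_le_range]

/-- the inner products of the columns of the Helmert matrix: `UᵀU = I - J/m`. -/
lemma colProd_le {m i j : ℕ} (hij : i ≤ j) (hj : j < m) :
    ∑ k ∈ Finset.range (m-1), uu k i * uu k j
      = (if i = j then 1 else 0) - 1/(m:ℝ) := by
  have hm : 1 ≤ m := by omega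
  have hcast : ((m-1 : ℕ):ℝ) + 1 = (m:ℝ) := by
    rw [Nat.cast_sub hm]; push_cast; ring
  rcases Nat.lt_or_ge i j with hlt | hge
  · -- i < j
    have hj1 : 1 ≤ j := by omega
    have hstep : ∀ k ∈ Finset.range (m-1), uu k i * uu k j
        = (if j ≤ k then (1 / ((((k:ℝ)+1))*((k:ℝ)+2))) else 0)
          + (if k = j - 1 then -(1/((j:ℝ)+1)) else 0) := by
      intro k _
      rcases Nat.lt_or_ge k j with hkj | hkj
      · rcases Nat.lt_or_ge k (j-1) with hkj1 | hkj1
        · -- k < j - 1 : uu k j = 0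
          have h1 : ¬ j ≤ k := by omega
          have h2 : j ≠ k + 1 := by omega
          rw [if_neg (by omega : ¬ j ≤ k), if_neg (by omega : ¬ k = j - 1)]
          simp [uu, h1, h2]
        · -- k = j - 1
          have h1 : ¬ j ≤ k := by omega
          have h2 : j = k + 1 := by omega
          have h3 : i ≤ k := by omega
          rw [if_neg (by omega : ¬ j ≤ k), if_pos (by omega : k = j - 1)]
          simp only [uu, if_pos h3, if_neg h1, if_pos h2]
          rw [div_mul_div_comm, one_mul, rr_sq]
          have hk1 : ((k:ℝ)+1) ≠ 0 := by positivity
          have hk2 : ((k:ℝ)+2) ≠ 0 := by positivity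
          have hjc : (j:ℝ) = (k:ℝ) + 1 := by rw [h2]; push_cast; ring
          rw [hjc]
          field_simp
          ring
      · -- j ≤ k
        have h3 : i ≤ k := by omega
        rw [if_pos hkj, if_neg (by omega : ¬ k = j - 1), add_zero]
        simp only [uu, if_pos h3, if_pos hkj]
        rw [div_mul_div_comm, one_mul, rr_sq]
    rw [Finset.sum_congr rfl hstep, Finset.sum_add_distrib, sum_ite_le,
      telescope (by omega : j ≤ m - 1), Finset.sum_ite_eq' (Finset.range (m-1)),
      if_pos (by simp only [Finset.mem_range]; omega : j - 1 ∈ Finset.range (m-1)),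
      if_neg (by omega : ¬ i = j), hcast]
    ring
  · -- i = j
    have hij' : i = j := by omega
    subst hij'
    rw [if_pos rfl]
    rcases Nat.eq_zero_or_pos i with h0 | h1
    · subst h0
      have hstep : ∀ k ∈ Finset.range (m-1), uu k 0 * uu k 0
          = 1 / ((((k:ℝ)+1))*((k:ℝ)+2)) := by
        intro k _
        simp only [uu, if_pos (Nat.zero_le k)]
        rw [div_mul_div_comm, one_mul, rr_sq]
      rw [Finset.sum_congr rfl hstep, Finset.range_eq_Ico,
        telescope (by omega : 0 ≤ m - 1), hcast]
      norm_num
    · have hstep : ∀ k ∈ Finset.range (m-1), uu k i * uu k i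
          = (if i ≤ k then (1 / ((((k:ℝ)+1))*((k:ℝ)+2))) else 0)
            + (if k = i - 1 then ((i:ℝ)/((i:ℝ)+1)) else 0) := by
        intro k _
        rcases Nat.lt_or_ge k i with hki | hki
        · rcases Nat.lt_or_ge k (i-1) with hki1 | hki1
          · have h1 : ¬ i ≤ k := by omega
            have h2 : i ≠ k + 1 := by omega
            rw [if_neg h1, if_neg (by omega : ¬ k = i - 1)]
            simp [uu, h1, h2]
          · -- k = i - 1
            have h1 : ¬ i ≤ k := by omega
            have h2 : i = k + 1 := by omega
            rw [if_neg h1, if_pos (by omega : k = i - 1), zero_add]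
            simp only [uu, if_neg h1, if_pos h2]
            rw [div_mul_div_comm, rr_sq]
            have hk1 : ((k:ℝ)+1) ≠ 0 := by positivity
            have hk2 : ((k:ℝ)+2) ≠ 0 := by positivity
            have hic : (i:ℝ) = (k:ℝ) + 1 := by rw [h2]; push_cast; ring
            rw [hic]
            field_simp
            ring
        · rw [if_pos hki, if_neg (by omega : ¬ k = i - 1), add_zero]
          simp only [uu, if_pos hki]
          rw [div_mul_div_comm, one_mul, rr_sq]
      rw [Finset.sum_congr rfl hstep, Finset.sum_add_distrib, sum_ite_le,
        telescope (by omega : i ≤ m - 1), Finset.sum_ite_eq' (Finset.range (m-1)),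
        if_pos (by simp only [Finset.mem_range]; omega : i - 1 ∈ Finset.range (m-1)), hcast]
      have hi1 : ((i:ℝ)+1) ≠ 0 := by positivity
      field_simp
      ring

lemma colProd {m i j : ℕ} (hi : i < m) (hj : j < m) :
    ∑ k ∈ Finset.range (m-1), uu k i * uu k j
      = (if i = j then 1 else 0) - 1/(m:ℝ) := by
  rcases le_total i j with h | h
  · exact colProd_le h hj
  · have := colProd_le h hi
    simp only [mul_comm] at this
    rw [this]
    by_cases hij : i = j <;> simp [hij, eq_comm]

/-- squared norms of differences of rows: `∑ k (u k i - u k j)² = 2` for `i ≠ j`. -/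
lemma diff_sq {m i j : ℕ} (hi : i < m) (hj : j < m) (hij : i ≠ j) :
    ∑ k ∈ Finset.range (m-1), (uu k i - uu k j)^2 = 2 := by
  have hm : 1 ≤ m := by omega
  have e : ∀ k ∈ Finset.range (m-1), (uu k i - uu k j)^2
      = uu k i * uu k i + uu k j * uu k j - 2 * (uu k i * uu k j) := by
    intro k _; ring
  rw [Finset.sum_congr rfl e, Finset.sum_sub_distrib, Finset.sum_add_distrib,
    ← Finset.mul_sum, colProd hi hi, colProd hj hj, colProd hi hj,
    if_pos rfl, if_pos rfl, if_neg hij]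
  have : (m:ℝ) ≠ 0 := by positivity
  field_simp
  ring


open Polynomial

/-- difference of two rows of the Helmert matrix -/
noncomputable def dd (i j k : ℕ) : ℝ := uu k i - uu k j

lemma dd_ne {m i j : ℕ} (hi : i < m) (hj : j < m) (hij : i < j) :
    dd i j (j-1) ≠ 0 ∧ j - 1 < m - 1 := by
  constructor
  · have h1 : i ≤ j - 1 := by omega
    have h2 : ¬ j ≤ j - 1 := by omega
    have h3 : j = (j-1) + 1 := by omega
    simp only [dd, uu, if_pos h1, if_neg h2, if_pos h3]
    have := rr_pos (j-1)
    rw [div_sub_div_same, sub_neg_eq_add]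
    positivity
  · omega

noncomputable def SP (n : ℕ) : ℝ[X] := ∑ k ∈ Finset.range n, X^(2*k+2)
noncomputable def gP (n : ℕ) (d : ℕ → ℝ) : ℝ[X] := ∑ k ∈ Finset.range n, C (d k) * X^(k+1)
noncomputable def fP (n p : ℕ) (c : ℝ) (d : ℕ → ℝ) : ℝ[X] :=
  C c * SP n - C 2 * gP n d * X^(p+1)

lemma SP_coeff (n N : ℕ) : (SP n).coeff N
    = if ∃ k < n, N = 2*k+2 then 1 else 0 := by
  rw [SP, Polynomial.finset_sum_coeff]
  by_cases h : ∃ k < n, N = 2*k+2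
  · obtain ⟨k, hk, hN⟩ := h
    rw [if_pos ⟨k, hk, hN⟩, Finset.sum_eq_single k]
    · rw [coeff_X_pow, if_pos hN]
    · intro l hl hlk
      rw [coeff_X_pow, if_neg (by omega)]
    · intro hk'; exact absurd (Finset.mem_range.mpr hk) hk'
  · rw [if_neg h]
    apply Finset.sum_eq_zero
    intro k hk
    simp only [Finset.mem_range] at hk
    rw [coeff_X_pow, if_neg (fun hN => h ⟨k, hk, hN⟩)]

lemma gP_coeff_zero (n N : ℕ) (d : ℕ → ℝ) (hN : N = 0 ∨ n < N) : (gP n d).coeff N = 0 := by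
  rw [gP, Polynomial.finset_sum_coeff]
  apply Finset.sum_eq_zero
  intro k hk
  simp only [Finset.mem_range] at hk
  rw [coeff_C_mul, coeff_X_pow, if_neg (by omega), mul_zero]

lemma gP_coeff (n k : ℕ) (d : ℕ → ℝ) (hk : k < n) : (gP n d).coeff (k+1) = d k := by
  rw [gP, Polynomial.finset_sum_coeff, Finset.sum_eq_single k]
  · rw [coeff_C_mul, coeff_X_pow, if_pos rfl, mul_one]
  · intro l hl hlk
    rw [coeff_C_mul, coeff_X_pow, if_neg (by omega), mul_zero]
  · intro hk'; exact absurd (Finset.mem_range.mpr hk) hk'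

lemma fP_ne_zero {n p : ℕ} (hn : 2 ≤ n) (hp : p < n) (c : ℝ) (d : ℕ → ℝ)
    {k0 : ℕ} (hk0 : k0 < n) (hd : d k0 ≠ 0) : fP n p c d ≠ 0 := by
  by_cases hc : c = 0
  · subst hc
    rw [fP, map_zero, zero_mul, zero_sub, neg_ne_zero]
    refine mul_ne_zero (mul_ne_zero ?_ ?_) (pow_ne_zero _ X_ne_zero)
    · simpa using (two_ne_zero : (2:ℝ) ≠ 0)
    · intro hg
      apply hd
      rw [← gP_coeff n k0 d hk0, hg, coeff_zero]
  · rcases Nat.eq_zero_or_pos p with hp0 | hp1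
    · -- p = 0 : use coefficient 2n
      subst hp0
      intro hf
      have h2 := congrArg (fun q => Polynomial.coeff q (2*n)) hf
      simp only [fP, coeff_sub, coeff_C_mul, coeff_zero] at h2
      rw [SP_coeff, if_pos ⟨n-1, by omega, by omega⟩, coeff_mul_X_pow',
        if_pos (by omega), coeff_C_mul, gP_coeff_zero n _ d (by omega)] at h2
      simp at h2
      exact hc (by linarith)
    · -- p ≥ 1 : use coefficient 2
      intro hf
      have h2 := congrArg (fun q => Polynomial.coeff q 2) hf
      simp only [fP, coeff_sub, coeff_C_mul, coeff_zero] at h2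
      rw [SP_coeff, if_pos ⟨0, by omega, by omega⟩, coeff_mul_X_pow'] at h2
      rcases Nat.lt_or_ge 2 (p+1) with h | h
      · rw [if_neg (by omega)] at h2
        simp at h2
        exact hc (by linarith)
      · have hp2 : p = 1 := by omega
        subst hp2
        rw [if_pos (by omega), coeff_C_mul, gP_coeff_zero n _ d (by omega)] at h2
        simp at h2
        exact hc (by linarith)

/-- the real polynomial whose non-vanishing at `t` guarantees all required
nonzero conditions -/
noncomputable def PP (m : ℕ) : ℝ[X] :=
  X * ∏ p ∈ Finset.range (m-1), ∏ i ∈ Finset.range m, ∏ j ∈ Finset.range m,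
    (if i = j then 1 else fP (m-1) p (uu p i - uu p j) (dd i j))

lemma exists_t (m : ℕ) (hm : 3 ≤ m) :
    ∃ t : ℝ, t ≠ 0 ∧ ∀ p < m - 1, ∀ i < m, ∀ j < m, i ≠ j →
      (fP (m-1) p (uu p i - uu p j) (dd i j)).eval t ≠ 0 := by
  have hPP : PP m ≠ 0 := by
    rw [PP]
    refine mul_ne_zero X_ne_zero ?_
    rw [Finset.prod_ne_zero_iff]
    intro p hp
    rw [Finset.prod_ne_zero_iff]
    intro i hi
    rw [Finset.prod_ne_zero_iff]
    intro j hj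
    simp only [Finset.mem_range] at hp hi hj
    by_cases hij : i = j
    · rw [if_pos hij]; exact one_ne_zero
    · rw [if_neg hij]
      rcases Nat.lt_or_ge i j with h | h
      · obtain ⟨h1, h2⟩ := dd_ne hi hj h
        exact fP_ne_zero (by omega) hp _ _ h2 h1
      · have hlt : j < i := by omega
        obtain ⟨h1, h2⟩ := dd_ne hj hi hlt
        have h1' : dd i j (i-1) ≠ 0 := by
          simp only [dd] at h1 ⊢
          intro h; apply h1; linarith
        exact fP_ne_zero (by omega) hp _ _ h2 h1'
  obtain ⟨t, ht⟩ := (Polynomial.finite_setOf_isRoot hPP).infinite_compl.nonempty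
  simp only [Set.mem_compl_iff, Set.mem_setOf_eq, Polynomial.IsRoot] at ht
  refine ⟨t, ?_, ?_⟩
  · intro h0
    apply ht
    rw [PP, eval_mul, h0, eval_X, zero_mul]
  · intro p hp i hi j hj hij hf
    apply ht
    rw [PP, eval_mul]
    apply mul_eq_zero_of_right
    rw [eval_prod]
    apply Finset.prod_eq_zero (Finset.mem_range.mpr hp)
    rw [eval_prod]
    apply Finset.prod_eq_zero (Finset.mem_range.mpr hi)
    rw [eval_prod]
    apply Finset.prod_eq_zero (Finset.mem_range.mpr hj)
    rw [if_neg hij]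
    exact hf

lemma SP_eval (n : ℕ) (t : ℝ) : (SP n).eval t = ∑ k ∈ Finset.range n, t^(2*k+2) := by
  rw [SP, eval_finset_sum]
  simp

lemma gP_eval (n : ℕ) (d : ℕ → ℝ) (t : ℝ) :
    (gP n d).eval t = ∑ k ∈ Finset.range n, d k * t^(k+1) := by
  rw [gP, eval_finset_sum]
  simp

lemma fP_eval (n p : ℕ) (c : ℝ) (d : ℕ → ℝ) (t : ℝ) :
    (fP n p c d).eval t
      = c * (∑ k ∈ Finset.range n, t^(2*k+2))
        - 2 * (∑ k ∈ Finset.range n, d k * t^(k+1)) * t^(p+1) := by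
  rw [fP]
  simp [SP_eval, gP_eval]


noncomputable def St (n : ℕ) (t : ℝ) : ℝ := ∑ l ∈ Finset.range n, t^(2*l+2)

noncomputable def ww (n : ℕ) (t : ℝ) (k : ℕ) : ℝ := t^(k+1) / Real.sqrt (St n t)

/-- the Householder reflection `I - 2wwᵀ` -/
noncomputable def hh (n : ℕ) (t : ℝ) (k p : ℕ) : ℝ :=
  (if k = p then 1 else 0) - 2 * ww n t k * ww n t p

/-- the final columns: image of the Helmert basis under the Householder
reflection, scaled by `1/√2` -/
noncomputable def aa (n : ℕ) (t : ℝ) (p i : ℕ) : ℝ :=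
  (∑ k ∈ Finset.range n, hh n t k p * uu k i) / Real.sqrt 2

section
variable {n : ℕ} {t : ℝ}

lemma St_pos (hn : 1 ≤ n) (ht : t ≠ 0) : 0 < St n t := by
  apply Finset.sum_pos
  · intro l _
    have : t^(2*l+2) = (t^(l+1))^2 := by rw [← pow_mul]; ring_nf
    rw [this]
    positivity
  · exact ⟨0, Finset.mem_range.mpr (by omega)⟩

lemma sqrtSt_pos (hn : 1 ≤ n) (ht : t ≠ 0) : 0 < Real.sqrt (St n t) := Real.sqrt_pos.mpr (St_pos hn ht)

lemma ww_mul (hn : 1 ≤ n) (ht : t ≠ 0) (k l : ℕ) : ww n t k * ww n t l = t^(k+1) * t^(l+1) / St n t := by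
  rw [ww, ww, div_mul_div_comm, Real.mul_self_sqrt (St_pos hn ht).le]

lemma ww_sq_sum (hn : 1 ≤ n) (ht : t ≠ 0) : ∑ k ∈ Finset.range n, ww n t k * ww n t k = 1 := by
  have h : ∀ k ∈ Finset.range n, ww n t k * ww n t k = t^(2*k+2) / St n t := by
    intro k _
    rw [ww_mul hn ht, ← pow_add]
    ring_nf
  rw [Finset.sum_congr rfl h, ← Finset.sum_div, ← St]
  exact div_self (St_pos hn ht).ne'

lemma ww_hh_sum (hn : 1 ≤ n) (ht : t ≠ 0) {l : ℕ} (hl : l < n) :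
    ∑ p ∈ Finset.range n, ww n t p * hh n t l p = - ww n t l := by
  have h : ∀ p ∈ Finset.range n, ww n t p * hh n t l p
      = (if l = p then ww n t p else 0) - 2 * ww n t l * (ww n t p * ww n t p) := by
    intro p _
    by_cases hlp : l = p
    · rw [hh, if_pos hlp, if_pos hlp]; ring
    · rw [hh, if_neg hlp, if_neg hlp]; ring
  rw [Finset.sum_congr rfl h, Finset.sum_sub_distrib, Finset.sum_ite_eq,
    if_pos (Finset.mem_range.mpr hl), ← Finset.mul_sum, ww_sq_sum hn ht]
  ring

lemma hh_symm (k p : ℕ) : hh n t k p = hh n t p k := by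
  by_cases h : k = p
  · rw [h]
  · rw [hh, hh, if_neg h, if_neg (Ne.symm h)]; ring

lemma hh_ortho (hn : 1 ≤ n) (ht : t ≠ 0) {k l : ℕ} (hk : k < n) (hl : l < n) :
    ∑ p ∈ Finset.range n, hh n t k p * hh n t l p = if k = l then 1 else 0 := by
  have h : ∀ p ∈ Finset.range n, hh n t k p * hh n t l p
      = (if k = p then hh n t l p else 0) - 2 * ww n t k * (ww n t p * hh n t l p) := by
    intro p _
    rw [show hh n t k p = (if k = p then 1 else 0) - 2 * ww n t k * ww n t p from rfl]
    by_cases hkp : k = p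
    · rw [if_pos hkp, if_pos hkp]; ring
    · rw [if_neg hkp, if_neg hkp]; ring
  rw [Finset.sum_congr rfl h, Finset.sum_sub_distrib, Finset.sum_ite_eq,
    if_pos (Finset.mem_range.mpr hk), ← Finset.mul_sum, ww_hh_sum hn ht hl]
  simp only [hh]
  by_cases hkl : k = l
  · rw [if_pos hkl, if_pos (hkl.symm)]; ring
  · rw [if_neg hkl, if_neg (Ne.symm hkl)]; ring

end

section
variable {m : ℕ} {t : ℝ}

lemma aa_sum {p : ℕ} (hp : p < m - 1) :
    ∑ i ∈ Finset.range m, aa (m-1) t p i = 0 := by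
  simp only [aa]
  rw [← Finset.sum_div]
  apply div_eq_zero_iff.mpr
  left
  rw [Finset.sum_comm]
  apply Finset.sum_eq_zero
  intro k hk
  simp only [Finset.mem_range] at hk
  rw [← Finset.mul_sum, uu_sum (by omega : k + 1 < m), mul_zero]

lemma aa_ortho (hm : 3 ≤ m) (ht : t ≠ 0) {p q : ℕ} (hp : p < m - 1) (hq : q < m - 1) :
    ∑ i ∈ Finset.range m, aa (m-1) t p i * aa (m-1) t q i
      = (if p = q then 1 else 0) / 2 := by
  have hn : 1 ≤ m - 1 := by omega
  have hs : ∀ i ∈ Finset.range m, aa (m-1) t p i * aa (m-1) t q i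
      = (∑ k ∈ Finset.range (m-1), ∑ l ∈ Finset.range (m-1),
          (hh (m-1) t k p * hh (m-1) t l q) * (uu k i * uu l i)) / 2 := by
    intro i _
    rw [aa, aa, div_mul_div_comm, Real.mul_self_sqrt (by norm_num : (0:ℝ) ≤ 2),
      Finset.sum_mul_sum]
    congr 1
    apply Finset.sum_congr rfl; intro k _
    apply Finset.sum_congr rfl; intro l _
    ring
  rw [Finset.sum_congr rfl hs, ← Finset.sum_div]
  congr 1
  rw [Finset.sum_comm]
  have h2 : ∀ k ∈ Finset.range (m-1),
      ∑ i ∈ Finset.range m, ∑ l ∈ Finset.range (m-1),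
        (hh (m-1) t k p * hh (m-1) t l q) * (uu k i * uu l i)
      = hh (m-1) t k p * hh (m-1) t k q := by
    intro k hk
    simp only [Finset.mem_range] at hk
    rw [Finset.sum_comm]
    have h3 : ∀ l ∈ Finset.range (m-1),
        ∑ i ∈ Finset.range m, (hh (m-1) t k p * hh (m-1) t l q) * (uu k i * uu l i)
        = if k = l then hh (m-1) t k p * hh (m-1) t l q else 0 := by
      intro l hl
      simp only [Finset.mem_range] at hl
      rw [← Finset.mul_sum, uu_ortho (by omega : k+1 < m) (by omega : l+1 < m)]
      by_cases hkl : k = l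
      · rw [if_pos hkl, if_pos hkl, mul_one]
      · rw [if_neg hkl, if_neg hkl, mul_zero]
    rw [Finset.sum_congr rfl h3, Finset.sum_ite_eq, if_pos (Finset.mem_range.mpr hk)]
  rw [Finset.sum_congr rfl h2]
  have h4 : ∀ k ∈ Finset.range (m-1),
      hh (m-1) t k p * hh (m-1) t k q = hh (m-1) t p k * hh (m-1) t q k := by
    intro k _
    rw [hh_symm, hh_symm (k := k) (p := q)]
  rw [Finset.sum_congr rfl h4, hh_ortho hn ht hp hq]

lemma aa_diff (p i j : ℕ) :
    aa (m-1) t p i - aa (m-1) t p j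
      = (∑ k ∈ Finset.range (m-1), hh (m-1) t k p * dd i j k) / Real.sqrt 2 := by
  rw [aa, aa, div_sub_div_same, ← Finset.sum_sub_distrib]
  congr 1
  apply Finset.sum_congr rfl
  intro k _
  rw [dd]
  ring

lemma aa_diff_sq (hm : 3 ≤ m) (ht : t ≠ 0) {i j : ℕ} (hi : i < m) (hj : j < m) (hij : i ≠ j) :
    ∑ p ∈ Finset.range (m-1), (aa (m-1) t p i - aa (m-1) t p j)^2 = 1 := by
  have hn : 1 ≤ m - 1 := by omega
  have hs : ∀ p ∈ Finset.range (m-1), (aa (m-1) t p i - aa (m-1) t p j)^2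
      = (∑ k ∈ Finset.range (m-1), ∑ l ∈ Finset.range (m-1),
          (dd i j k * dd i j l) * (hh (m-1) t k p * hh (m-1) t l p)) / 2 := by
    intro p _
    rw [aa_diff, div_pow, Real.sq_sqrt (by norm_num : (0:ℝ) ≤ 2), pow_two,
      Finset.sum_mul_sum]
    congr 1
    apply Finset.sum_congr rfl; intro k _
    apply Finset.sum_congr rfl; intro l _
    ring
  rw [Finset.sum_congr rfl hs, ← Finset.sum_div]
  rw [Finset.sum_comm]
  have h2 : ∀ k ∈ Finset.range (m-1),
      ∑ p ∈ Finset.range (m-1), ∑ l ∈ Finset.range (m-1),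
        (dd i j k * dd i j l) * (hh (m-1) t k p * hh (m-1) t l p)
      = dd i j k * dd i j k := by
    intro k hk
    rw [Finset.sum_comm]
    have h3 : ∀ l ∈ Finset.range (m-1),
        ∑ p ∈ Finset.range (m-1), (dd i j k * dd i j l) * (hh (m-1) t k p * hh (m-1) t l p)
        = if k = l then dd i j k * dd i j l else 0 := by
      intro l hl
      simp only [Finset.mem_range] at hl
      simp only [Finset.mem_range] at hk
      rw [← Finset.mul_sum, hh_ortho hn ht hk hl]
      by_cases hkl : k = l
      · rw [if_pos hkl, if_pos hkl, mul_one]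
      · rw [if_neg hkl, if_neg hkl, mul_zero]
    rw [Finset.sum_congr rfl h3, Finset.sum_ite_eq, if_pos hk]
  rw [Finset.sum_congr rfl h2]
  have h5 : ∀ k ∈ Finset.range (m-1), dd i j k * dd i j k = (uu k i - uu k j)^2 := by
    intro k _
    rw [dd, pow_two]
  rw [Finset.sum_congr rfl h5, diff_sq hi hj hij]
  norm_num

lemma aa_diff_core (hm : 3 ≤ m) (ht : t ≠ 0) {p i j : ℕ} (hp : p < m - 1) :
    ∑ k ∈ Finset.range (m-1), hh (m-1) t k p * dd i j k
      = (fP (m-1) p (uu p i - uu p j) (dd i j)).eval t / St (m-1) t := by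
  have hn : 1 ≤ m - 1 := by omega
  have hS := St_pos (n := m-1) (t := t) hn ht
  have h : ∀ k ∈ Finset.range (m-1), hh (m-1) t k p * dd i j k
      = (if k = p then dd i j k else 0)
        - 2 * ww (m-1) t p * (dd i j k * t^(k+1)) / Real.sqrt (St (m-1) t) := by
    intro k _
    rw [hh, ww]
    by_cases hkp : k = p
    · rw [if_pos hkp, if_pos hkp]; field_simp
    · rw [if_neg hkp, if_neg hkp]
      field_simp
      try exact Or.inl trivial
      try exact Or.inl (by ring)
      ring
  rw [Finset.sum_congr rfl h, Finset.sum_sub_distrib, Finset.sum_ite_eq',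
    if_pos (Finset.mem_range.mpr hp), fP_eval]
  have hG : ∑ k ∈ Finset.range (m-1),
      2 * ww (m-1) t p * (dd i j k * t^(k+1)) / Real.sqrt (St (m-1) t)
      = 2 * (∑ k ∈ Finset.range (m-1), dd i j k * t^(k+1)) * t^(p+1) / St (m-1) t := by
    rw [← Finset.sum_div, ← Finset.mul_sum, ww]
    have hs0 : Real.sqrt (St (m-1) t) ≠ 0 := (Real.sqrt_pos.mpr hS).ne'
    rw [div_eq_div_iff hs0 hS.ne', ← Real.sq_sqrt hS.le]
    field_simp
    rw [Real.sqrt_sq (Real.sqrt_nonneg _)]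
  rw [hG, dd, sub_div]
  congr 1
  rw [show (∑ k ∈ Finset.range (m-1), t^(2*k+2)) = St (m-1) t from rfl,
    mul_div_assoc, div_self hS.ne', mul_one]

end


end Lemma23Aux

open Lemma23Aux in
/-- **Test functions in the proof of Lemma 23.** For `m ≥ 3` there are linearly
independent elements `F 0, …, F (m - 2)` of `D2` (antisymmetric arrays satisfying the
cocycle equations) all of whose components `(F p) i j` (`i ≠ j`) are nonzero, and such
that `∑_p ((F p) i j)^2 = 1` for every pair `i < j`. -/
theorem exists_linearIndependent_partition_of_unity_in_D2 (m : ℕ) (hm : 3 ≤ m) :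
    ∃ F : Fin (m - 1) → (Fin m → Fin m → ℝ),
      (∀ p : Fin (m - 1), ∀ i j : Fin m, F p i j = - F p j i) ∧
      (∀ p : Fin (m - 1), ∀ i j k : Fin m, i < j → j < k →
        F p i j + F p j k + F p k i = 0) ∧
      LinearIndependent ℝ F ∧
      (∀ p : Fin (m - 1), ∀ i j : Fin m, i ≠ j → F p i j ≠ 0) ∧
      (∀ i j : Fin m, i < j → ∑ p : Fin (m - 1), (F p i j) ^ 2 = 1) := by
  obtain ⟨t, ht0, hft⟩ := exists_t m hm
  refine ⟨fun p i j => aa (m-1) t ↑p ↑i - aa (m-1) t ↑p ↑j, ?_, ?_, ?_, ?_, ?_⟩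
  · intro p i j; ring
  · intro p i j k _ _; ring
  · -- linear independence
    rw [Fintype.linearIndependent_iff]
    intro g hg q
    have hg' : ∀ i j : Fin m,
        ∑ p : Fin (m-1), g p * (aa (m-1) t ↑p ↑i - aa (m-1) t ↑p ↑j) = 0 := by
      intro i j
      have h := congrFun (congrFun hg i) j
      simpa [Finset.sum_apply, smul_eq_mul] using h
    set A : ℕ → ℝ := fun i => ∑ p : Fin (m-1), g p * aa (m-1) t ↑p i with hA
    have hAeq : ∀ i j : Fin m, A ↑i = A ↑j := by
      intro i j
      have h := hg' i j
      rw [Finset.sum_congr rfl (fun p _ => mul_sub (g p) _ _),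
        Finset.sum_sub_distrib, sub_eq_zero] at h
      exact h
    have hAsum : ∑ i ∈ Finset.range m, A i = 0 := by
      rw [hA, Finset.sum_comm]
      apply Finset.sum_eq_zero
      intro p _
      rw [← Finset.mul_sum, aa_sum p.isLt, mul_zero]
    have hA0 : ∀ i : Fin m, A ↑i = 0 := by
      intro i
      have h1 : ∑ j ∈ Finset.range m, A j = (m:ℝ) * A ↑i := by
        rw [Finset.sum_congr rfl
            (fun j hj => hAeq ⟨j, Finset.mem_range.mp hj⟩ i),
          Finset.sum_const, Finset.card_range, nsmul_eq_mul]
      rw [hAsum] at h1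
      have hm0 : (m:ℝ) ≠ 0 := by positivity
      exact (mul_eq_zero.mp h1.symm).resolve_left hm0
    have h2 : ∑ i ∈ Finset.range m, aa (m-1) t ↑q i * A i = g q / 2 := by
      have hterm : ∀ i ∈ Finset.range m, aa (m-1) t ↑q i * A i
          = ∑ p : Fin (m-1), g p * (aa (m-1) t ↑p i * aa (m-1) t ↑q i) := by
        intro i _
        rw [hA, Finset.mul_sum]
        apply Finset.sum_congr rfl
        intro p _
        ring
      rw [Finset.sum_congr rfl hterm, Finset.sum_comm]
      have hterm2 : ∀ p : Fin (m-1), (p ∈ Finset.univ) →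
          ∑ i ∈ Finset.range m, g p * (aa (m-1) t ↑p i * aa (m-1) t ↑q i)
            = if p = q then g p / 2 else 0 := by
        intro p _
        rw [← Finset.mul_sum, aa_ortho hm ht0 p.isLt q.isLt]
        by_cases hpq : p = q
        · rw [if_pos hpq, if_pos (by rw [hpq] : (p:ℕ) = (q:ℕ))]; ring
        · rw [if_neg hpq, if_neg (fun h => hpq (Fin.val_injective h)), zero_div, mul_zero]
      rw [Finset.sum_congr rfl hterm2, Finset.sum_ite_eq' Finset.univ q (fun p => g p / 2),
        if_pos (Finset.mem_univ q)]
    have h3 : ∑ i ∈ Finset.range m, aa (m-1) t ↑q i * A i = 0 := by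
      apply Finset.sum_eq_zero
      intro i hi
      rw [hA0 ⟨i, Finset.mem_range.mp hi⟩, mul_zero]
    rw [h3] at h2
    have := h2.symm
    linarith
  · -- nonzero entries
    intro p i j hij
    have hvij : (i:ℕ) ≠ (j:ℕ) := fun h => hij (Fin.val_injective h)
    show aa (m-1) t ↑p ↑i - aa (m-1) t ↑p ↑j ≠ 0
    rw [aa_diff]
    apply div_ne_zero
    · rw [aa_diff_core hm ht0 p.isLt]
      exact div_ne_zero (hft ↑p p.isLt ↑i i.isLt ↑j j.isLt hvij)
        (St_pos (by omega) ht0).ne'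
    · exact (Real.sqrt_pos.mpr (by norm_num)).ne'
  · -- partition of unity
    intro i j hij
    have hvij : (i:ℕ) ≠ (j:ℕ) := by
      have := (Fin.lt_iff_val_lt_val.mp hij)
      omega
    have h := aa_diff_sq hm ht0 i.isLt j.isLt hvij
    rw [← Fin.sum_univ_eq_sum_range
      (fun p => (aa (m-1) t p ↑i - aa (m-1) t p ↑j)^2) (m-1)] at h
    exact h
end
end
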